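/- Let H=(V,E,w) be a directed hypergraph with weighted-degree vertex weights ω, and suppose ω_u > 0 for every u ∈ V. Then for every nonempty proper subset S ⊂ V with ω(S) ≤ ω(V)/2, we have γ₂ ≤ 2·φ(S). In particular, γ₂/2 ≤ φ_H, where φ_H := min{ φ(S) : ∅ ≠ S ⊂ V, ω(S) ≤ ω(V)/2 }. -/

import Mathlib

open Finset
open scoped Classical

noncomputable section

structure DirHyp (V E : Type) [Fintype V] [Fintype E] where
  Tl : E → Finset V
  Hd : E → Finset V
  w : E → ℝ
  Tl_ne : ∀ e, (Tl e).Nonempty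
  Hd_ne : ∀ e, (Hd e).Nonempty
  w_nonneg : ∀ e, 0 ≤ w e

variable {V E : Type} [Fintype V] [DecidableEq V] [Fintype E]

/-- Discrepancy of edge `e` w.r.t. density `f`. -/
def disc (G : DirHyp V E) (f : V → ℝ) (e : E) : ℝ :=
  (G.Tl e).sup' (G.Tl_ne e) f - (G.Hd e).inf' (G.Hd_ne e) f

/-- Weighted degree of vertex `u`. -/
def vw (G : DirHyp V E) (u : V) : ℝ :=
  ∑ e : E, if u ∈ G.Tl e ∪ G.Hd e then G.w e else 0

/-- Total weight of a vertex subset. -/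
def wS (G : DirHyp V E) (S : Finset V) : ℝ := ∑ u ∈ S, vw G u

/-- Discrepancy ratio. -/
def discRatio (G : DirHyp V E) (f : V → ℝ) : ℝ :=
  (∑ e : E, G.w e * (max (disc G f e) 0) ^ 2) / (∑ u : V, vw G u * (f u) ^ 2)

/-- `γ₂`. -/
def gamma2 (G : DirHyp V E) : ℝ :=
  sInf {x : ℝ | ∃ f : V → ℝ, f ≠ 0 ∧ (∑ u : V, vw G u * f u) = 0 ∧ x = discRatio G f}

def outCut (G : DirHyp V E) (S : Finset V) : Finset E :=
  Finset.univ.filter fun e => (G.Tl e ∩ S).Nonempty ∧ (G.Hd e ∩ Sᶜ).Nonempty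

def inCut (G : DirHyp V E) (S : Finset V) : Finset E :=
  Finset.univ.filter fun e => (G.Tl e ∩ Sᶜ).Nonempty ∧ (G.Hd e ∩ S).Nonempty

def phiPlus (G : DirHyp V E) (S : Finset V) : ℝ := (∑ e ∈ outCut G S, G.w e) / wS G S

def phiMinus (G : DirHyp V E) (S : Finset V) : ℝ := (∑ e ∈ inCut G S, G.w e) / wS G S

def phi (G : DirHyp V E) (S : Finset V) : ℝ := min (phiPlus G S) (phiMinus G S)

/-- Reversed hypergraph. -/
def rev (G : DirHyp V E) : DirHyp V E :=
  ⟨G.Hd, G.Tl, G.w, G.Hd_ne, G.Tl_ne, G.w_nonneg⟩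

lemma vw_rev (G : DirHyp V E) : vw (rev G) = vw G := by
  funext u
  unfold vw rev
  simp [Finset.mem_union, or_comm]

lemma wS_rev (G : DirHyp V E) (S : Finset V) : wS (rev G) S = wS G S := by
  simp [wS, vw_rev]

lemma outCut_rev (G : DirHyp V E) (S : Finset V) : outCut (rev G) S = inCut G S := by
  unfold outCut inCut rev
  apply Finset.filter_congr
  intro e _
  exact and_comm

lemma phiPlus_rev (G : DirHyp V E) (S : Finset V) : phiPlus (rev G) S = phiMinus G S := by
  rw [phiPlus, phiMinus, outCut_rev, wS_rev]
  rfl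

lemma sup'_neg' (s : Finset V) (hs : s.Nonempty) (f : V → ℝ) :
    s.sup' hs (fun u => -f u) = -s.inf' hs f := by
  apply le_antisymm
  · exact Finset.sup'_le _ _ fun v hv => neg_le_neg (Finset.inf'_le _ hv)
  · rw [neg_le]
    exact Finset.le_inf' _ _ fun v hv => by
      rw [neg_le]
      exact Finset.le_sup' (fun u => -f u) hv

lemma inf'_neg' (s : Finset V) (hs : s.Nonempty) (f : V → ℝ) :
    s.inf' hs (fun u => -f u) = -s.sup' hs f := by
  apply le_antisymm
  · rw [le_neg]
    exact Finset.sup'_le _ _ fun v hv => by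
      rw [le_neg]
      exact Finset.inf'_le (fun u => -f u) hv
  · exact Finset.le_inf' _ _ fun v hv => neg_le_neg (Finset.le_sup' _ hv)

lemma disc_rev (G : DirHyp V E) (f : V → ℝ) (e : E) :
    disc (rev G) f e = disc G (fun u => -f u) e := by
  unfold disc rev
  simp only
  rw [sup'_neg', inf'_neg']
  ring

lemma sup'_eval (s : Finset V) (hs : s.Nonempty) (S : Finset V) (a b : ℝ) (hab : b ≤ a) :
    s.sup' hs (fun u => if u ∈ S then a else b) = if (s ∩ S).Nonempty then a else b := by
  split_ifs with h
  · obtain ⟨u, hu⟩ := h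
    rw [Finset.mem_inter] at hu
    apply le_antisymm
    · exact Finset.sup'_le _ _ fun v _ => by split_ifs <;> simp [hab]
    · have := Finset.le_sup' (f := fun u => if u ∈ S then a else b) hu.1
      exact le_trans (by simp [hu.2]) this
  · apply le_antisymm
    · apply Finset.sup'_le
      intro v hv
      have hvS : v ∉ S := fun hvS => h ⟨v, Finset.mem_inter.mpr ⟨hv, hvS⟩⟩
      simp [hvS]
    · obtain ⟨v, hv⟩ := hs
      have hvS : v ∉ S := fun hvS => h ⟨v, Finset.mem_inter.mpr ⟨hv, hvS⟩⟩
      have := Finset.le_sup' (f := fun u => if u ∈ S then a else b) hv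
      simpa [hvS] using this

lemma inf'_eval (s : Finset V) (hs : s.Nonempty) (S : Finset V) (a b : ℝ) (hab : b ≤ a) :
    s.inf' hs (fun u => if u ∈ S then a else b) = if (s ∩ Sᶜ).Nonempty then b else a := by
  split_ifs with h
  · obtain ⟨u, hu⟩ := h
    rw [Finset.mem_inter, Finset.mem_compl] at hu
    apply le_antisymm
    · have := Finset.inf'_le (f := fun u => if u ∈ S then a else b) hu.1
      exact le_trans this (by simp [hu.2])
    · exact Finset.le_inf' _ _ fun v _ => by split_ifs <;> simp [hab]
  · apply le_antisymm
    · obtain ⟨v, hv⟩ := hs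
      have hvS : v ∈ S := by
        by_contra hc
        exact h ⟨v, Finset.mem_inter.mpr ⟨hv, Finset.mem_compl.mpr hc⟩⟩
      have := Finset.inf'_le (f := fun u => if u ∈ S then a else b) hv
      simpa [hvS] using this
    · apply Finset.le_inf'
      intro v hv
      have hvS : v ∈ S := by
        by_contra hc
        exact h ⟨v, Finset.mem_inter.mpr ⟨hv, Finset.mem_compl.mpr hc⟩⟩
      simp [hvS]

lemma disc_eval (G : DirHyp V E) (S : Finset V) (a b : ℝ) (ha : 0 ≤ a) (hb : 0 ≤ b) (e : E) :
    max (disc G (fun u => if u ∈ S then a else -b) e) 0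
      = if e ∈ outCut G S then a + b else 0 := by
  have hab : -b ≤ a := le_trans (neg_nonpos.mpr hb) ha
  rw [disc, sup'_eval _ _ _ _ _ hab, inf'_eval _ _ _ _ _ hab]
  simp only [outCut, Finset.mem_filter, Finset.mem_univ, true_and]
  by_cases h1 : ((G.Tl e) ∩ S).Nonempty <;> by_cases h2 : ((G.Hd e) ∩ Sᶜ).Nonempty
  · rw [if_pos h1, if_pos h2, if_pos ⟨h1, h2⟩, sub_neg_eq_add]
    exact max_eq_left (by linarith)
  · rw [if_pos h1, if_neg h2, if_neg (fun h => h2 h.2)]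
    simp
  · rw [if_neg h1, if_pos h2, if_neg (fun h => h1 h.1)]
    simp
  · rw [if_neg h1, if_neg h2, if_neg (fun h => h1 h.1)]
    exact max_eq_right (by linarith)

lemma ratio_calc (G : DirHyp V E) (hpos : ∀ u : V, 0 < vw G u) (S : Finset V)
    (hne : S.Nonempty) (hne' : Sᶜ.Nonempty) :
    discRatio G (fun u => if u ∈ S then wS G Sᶜ else -(wS G S))
      = (wS G S + wS G Sᶜ) / wS G Sᶜ * phiPlus G S := by
  set s := wS G S with hs
  set t := wS G Sᶜ with ht
  have hspos : 0 < s := Finset.sum_pos (fun u _ => hpos u) hne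
  have htpos : 0 < t := Finset.sum_pos (fun u _ => hpos u) hne'
  have hnum : ∑ e : E, G.w e * (max (disc G (fun u => if u ∈ S then t else -s) e) 0) ^ 2
      = (t + s) ^ 2 * ∑ e ∈ outCut G S, G.w e := by
    rw [Finset.mul_sum, outCut, Finset.sum_filter]
    apply Finset.sum_congr rfl
    intro e _
    rw [disc_eval G S t s htpos.le hspos.le e]
    simp only [outCut, Finset.mem_filter, Finset.mem_univ, true_and]
    split_ifs <;> ring
  have hden : ∑ u : V, vw G u * ((if u ∈ S then t else -s) : ℝ) ^ 2 = s * t ^ 2 + t * s ^ 2 := by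
    rw [← Finset.sum_add_sum_compl S]
    have h1 : ∑ u ∈ S, vw G u * ((if u ∈ S then t else -s) : ℝ) ^ 2 = s * t ^ 2 := by
      calc ∑ u ∈ S, vw G u * ((if u ∈ S then t else -s) : ℝ) ^ 2
          = ∑ u ∈ S, vw G u * t ^ 2 :=
            Finset.sum_congr rfl (fun u hu => by rw [if_pos hu])
        _ = (∑ u ∈ S, vw G u) * t ^ 2 := by rw [← Finset.sum_mul]
        _ = s * t ^ 2 := by rw [hs, wS]
    have h2 : ∑ u ∈ Sᶜ, vw G u * ((if u ∈ S then t else -s) : ℝ) ^ 2 = t * s ^ 2 := by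
      calc ∑ u ∈ Sᶜ, vw G u * ((if u ∈ S then t else -s) : ℝ) ^ 2
          = ∑ u ∈ Sᶜ, vw G u * s ^ 2 :=
            Finset.sum_congr rfl (fun u hu => by rw [if_neg (Finset.mem_compl.mp hu), neg_sq])
        _ = (∑ u ∈ Sᶜ, vw G u) * s ^ 2 := by rw [← Finset.sum_mul]
        _ = t * s ^ 2 := by rw [ht, wS]
    rw [h1, h2]
  rw [discRatio, hnum, hden, phiPlus, ← hs]
  field_simp
  ring

lemma gamma2_le (G : DirHyp V E) (hpos : ∀ u : V, 0 < vw G u) (f : V → ℝ) (hf : f ≠ 0)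
    (hmean : (∑ u : V, vw G u * f u) = 0) : gamma2 G ≤ discRatio G f := by
  apply csInf_le
  · refine ⟨0, ?_⟩
    rintro x ⟨g, -, -, rfl⟩
    apply div_nonneg
    · exact Finset.sum_nonneg fun e _ => mul_nonneg (G.w_nonneg e) (sq_nonneg _)
    · exact Finset.sum_nonneg fun u _ => mul_nonneg (hpos u).le (sq_nonneg _)
  · exact ⟨f, hf, hmean, rfl⟩

/-- Cheeger lower bound, per-set form.
For every nonempty proper `S ⊂ V` with `ω(S) ≤ ω(V)/2` we have `γ₂ ≤ 2 φ(S)`;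
in particular `γ₂ / 2 ≤ φ_H`. -/
theorem cheeger_lower_bound (G : DirHyp V E) (hpos : ∀ u : V, 0 < vw G u)
    (S : Finset V) (hne : S.Nonempty) (hproper : S ≠ Finset.univ)
    (hhalf : wS G S ≤ wS G Finset.univ / 2) :
    gamma2 G ≤ 2 * phi G S := by
  classical
  have hne' : (Sᶜ : Finset V).Nonempty :=
    Finset.nonempty_iff_ne_empty.mpr (fun h => hproper ((Finset.compl_eq_empty_iff S).mp h))
  set s := wS G S with hs
  set t := wS G Sᶜ with ht
  have hspos : 0 < s := Finset.sum_pos (fun u _ => hpos u) hne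
  have htpos : 0 < t := Finset.sum_pos (fun u _ => hpos u) hne'
  have hsum : wS G Finset.univ = s + t := by
    rw [hs, ht, wS, wS, wS, ← Finset.sum_add_sum_compl S]
  have hst : s ≤ t := by rw [hsum] at hhalf; linarith
  set f : V → ℝ := fun u => if u ∈ S then t else -s with hf
  have hmean : (∑ u : V, vw G u * f u) = 0 := by
    rw [← Finset.sum_add_sum_compl S]
    have h1 : ∑ u ∈ S, vw G u * f u = s * t := by
      calc ∑ u ∈ S, vw G u * f u = ∑ u ∈ S, vw G u * t :=
            Finset.sum_congr rfl (fun u hu => by rw [hf]; simp [hu])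
        _ = (∑ u ∈ S, vw G u) * t := by rw [← Finset.sum_mul]
        _ = s * t := by rw [hs, wS]
    have h2 : ∑ u ∈ Sᶜ, vw G u * f u = t * (-s) := by
      calc ∑ u ∈ Sᶜ, vw G u * f u = ∑ u ∈ Sᶜ, vw G u * (-s) :=
            Finset.sum_congr rfl (fun u hu => by rw [hf]; simp [Finset.mem_compl.mp hu])
        _ = (∑ u ∈ Sᶜ, vw G u) * (-s) := by rw [← Finset.sum_mul]
        _ = t * (-s) := by rw [ht, wS]
    rw [h1, h2]; ring
  have hf0 : f ≠ 0 := by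
    obtain ⟨u, hu⟩ := hne
    intro hc
    have : f u = 0 := by rw [hc]; rfl
    rw [hf] at this
    simp [hu] at this
    linarith
  -- plus side
  have hratio : discRatio G f = (s + t) / t * phiPlus G S := by
    rw [hf]
    have h := ratio_calc G hpos S hne hne'
    simp only [← hs, ← ht] at h
    exact h
  have hplus : gamma2 G ≤ (s + t) / t * phiPlus G S := by
    rw [← hratio]
    exact gamma2_le G hpos f hf0 hmean
  -- minus side
  have hg0 : (fun u => -f u) ≠ 0 := by
    intro hc
    apply hf0
    funext u
    have : -f u = 0 := congrFun hc u
    simpa using this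
  have hgmean : (∑ u : V, vw G u * (-f u)) = 0 := by
    simp only [mul_neg, Finset.sum_neg_distrib, hmean, neg_zero]
  have hdiscg : discRatio G (fun u => -f u) = (s + t) / t * phiMinus G S := by
    have heq : discRatio G (fun u => -f u) = discRatio (rev G) f := by
      unfold discRatio
      congr 1
      · apply Finset.sum_congr rfl
        intro e _
        rw [disc_rev G f e, rev]
      · rw [vw_rev]
        apply Finset.sum_congr rfl
        intro u _
        ring
    rw [heq]
    have hfrev : f = fun u => if u ∈ S then wS (rev G) Sᶜ else -(wS (rev G) S) := by
      simp only [wS_rev, ← hs, ← ht]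
      exact hf
    rw [hfrev, ratio_calc (rev G) (by rw [vw_rev]; exact hpos) S hne hne']
    simp only [wS_rev, phiPlus_rev, ← hs, ← ht]
  have hminus : gamma2 G ≤ (s + t) / t * phiMinus G S := by
    rw [← hdiscg]
    exact gamma2_le G hpos _ hg0 hgmean
  have hcoef : (s + t) / t ≤ 2 := by
    rw [div_le_iff₀ htpos]; linarith
  have hcoef0 : 0 ≤ (s + t) / t := by positivity
  have hphiplus0 : 0 ≤ phiPlus G S := by
    apply div_nonneg _ hspos.le
    exact Finset.sum_nonneg fun e _ => G.w_nonneg e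
  have hphiminus0 : 0 ≤ phiMinus G S := by
    apply div_nonneg _ hspos.le
    exact Finset.sum_nonneg fun e _ => G.w_nonneg e
  rcases le_total (phiPlus G S) (phiMinus G S) with hle | hle
  · rw [phi, min_eq_left hle]
    calc gamma2 G ≤ (s + t) / t * phiPlus G S := hplus
      _ ≤ 2 * phiPlus G S := mul_le_mul_of_nonneg_right hcoef hphiplus0
  · rw [phi, min_eq_right hle]
    calc gamma2 G ≤ (s + t) / t * phiMinus G S := hminus
      _ ≤ 2 * phiMinus G S := mul_le_mul_of_nonneg_right hcoef hphiminus0
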